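/- Let k ≥ 1, let t̄ ∈ R(K_2, Σ_2), let j ≥ k−1, and for a sequence v̄ ∈ R(K_2, Σ_2) with r_{k−1}(v̄) = r_{k−1}(t̄) let X(v̄, j) = {x : (v_0, …, v_{k−2}, x) ∈ r_k[k−1, v̄]} ∩ (⋃_{n≥j} Σ_2(v_j, …, v_n)). Then for any 2-coloring c′ of X(t̄, j) (extended to all such sets), there is a t̄^j ∈ [j, t̄] such that c′ is constant on X(t̄^j, j). -/
import Mathlib


open Filter

/- Example 2.11 of Roslanowski–Shelah.  H_2(n) = 2.  An element of K_2 is an FP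
creature t = (nor[t], val[t], dis[t], m^t_dn, m^t_up) with ∅ ≠ dis[t] ⊆ [m^t_dn, m^t_up),
∅ ≠ val[t] ⊆ 2^{dis[t]} and nor[t] = log₂|val[t]|.  Partial finitary functions are
modelled as f : ℕ → Option ℕ, with domain {j | (f j).isSome}. -/
structure Creature2 where
  mdn : ℕ
  mup : ℕ
  hm : mdn < mup
  dis : Finset ℕ
  hdisne : dis.Nonempty
  hdis : dis ⊆ Finset.Ico mdn mup
  val : Finset (ℕ → Option ℕ)
  hvalne : val.Nonempty
  hdom : ∀ f ∈ val, ∀ j, (f j).isSome ↔ j ∈ dis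
  hran : ∀ f ∈ val, ∀ j a, f j = some a → a < 2
  nor : ℝ
  hnor : nor = Real.logb 2 (val.card)

/- Σ_2(s̄↾u) for a nonempty finite u ⊆ ω (with s̄↾u = (s_i : i ∈ u)): creatures t with
m^t_dn = m^{s_{min u}}_dn, m^t_up = m^{s_{max u}}_up, and dis[t] = dis[s_{l*}],
val[t] ⊆ val[s_{l*}] for some l* ∈ u. -/
def Sigma2 (s : ℕ → Creature2) (u : Finset ℕ) : Set Creature2 :=
  {t | ∃ hu : u.Nonempty,
    t.mdn = (s (u.min' hu)).mdn ∧ t.mup = (s (u.max' hu)).mup ∧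
    ∃ l ∈ u, t.dis = (s l).dis ∧ t.val ⊆ (s l).val}

/- Pure candidates: m^{t_n}_up ≤ m^{t_{n+1}}_dn and nor[t_n] → ∞. -/
def PC2 (t : ℕ → Creature2) : Prop :=
  (∀ n, (t n).mup ≤ (t (n + 1)).mdn) ∧
  Tendsto (fun n => (t n).nor) atTop atTop

/- t̄ ≤ s̄ iff there are finite nonempty u_n ⊆ ω with max(u_n) < min(u_{n+1}) and
t_n ∈ Σ_2(s̄↾u_n) for all n. -/
def le2 (t s : ℕ → Creature2) : Prop :=
  ∃ u : ℕ → Finset ℕ, (∀ n, (u n).Nonempty) ∧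
    (∀ n, ∀ a ∈ u n, ∀ b ∈ u (n + 1), a < b) ∧
    ∀ n, t n ∈ Sigma2 s (u n)

/- Membership in R(K_2, Σ_2): pure candidates with |val[t_l]| = l + 1 for all l. -/
def R2cond (t : ℕ → Creature2) : Prop :=
  PC2 t ∧ ∀ l, (t l).val.card = l + 1

/- r_k(t̄) = (t_0, …, t_{k−1}). -/
def restr2 (t : ℕ → Creature2) (k : ℕ) : List Creature2 :=
  List.ofFn (fun i : Fin k => t i.1)

/- X(v̄, j) = {x : (v_0, …, v_{k−2}, x) ∈ r_k[k−1, v̄]} ∩ (⋃_{n≥j} Σ_2(v_j, …, v_n)),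
i.e. last entries of k-approximations of members of [k−1, v̄] which moreover lie in
some Σ_2(v_j, …, v_n) with n ≥ j. -/
def X2 (v : ℕ → Creature2) (k j : ℕ) : Set Creature2 :=
  {x | (∃ s : ℕ → Creature2, R2cond s ∧ le2 s v ∧
        restr2 s (k - 1) = restr2 v (k - 1) ∧ s (k - 1) = x) ∧
       ∃ n, j ≤ n ∧ x ∈ Sigma2 v (Finset.Icc j n)}

/- STATEMENT 14 (Claim `c`):
Let k ≥ 1, t̄ ∈ R(K_2, Σ_2), j ≥ k−1, and let c′ be a 2-coloring of X(t̄, j) (extended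
to all such sets: here a total coloring of creatures, which suffices).  Then there is
t̄^j ∈ [j, t̄] (in the space R(K_2, Σ_2)) such that c′ is constant on X(t̄^j, j). -/
section auxiliary

/-! ### Auxiliary lemmas: finite hypergraph Ramsey theorem -/

lemma ramsey_hyper {α : Type*} [LinearOrder α] : ∀ k m : ℕ, ∃ N : ℕ,
    ∀ (A : Finset α) (col : Finset α → Bool), N ≤ A.card →
      ∃ B, B ⊆ A ∧ B.card = m ∧ ∃ v : Bool, ∀ S ⊆ B, S.card = k → col S = v := by
  intro k
  induction k with
  | zero =>
    intro m
    refine ⟨m, fun A col hA => ?_⟩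
    obtain ⟨B, hBA, hBc⟩ := Finset.exists_subset_card_eq hA
    refine ⟨B, hBA, hBc, col ∅, fun S _ hS => ?_⟩
    rw [Finset.card_eq_zero] at hS; rw [hS]
  | succ k ih =>
    have endhom : ∀ s : ℕ, ∃ N : ℕ, ∀ (A : Finset α) (col : Finset α → Bool), N ≤ A.card →
        ∃ b, b ⊆ A ∧ b.card = s ∧ ∃ v : α → Bool,
          ∀ S, S ⊆ b → ∀ h : S.Nonempty, S.card = k + 1 → col S = v (S.min' h) := by
      intro s
      induction s with
      | zero =>
        refine ⟨0, fun A col _ => ⟨∅, Finset.empty_subset _, rfl, fun _ => true, ?_⟩⟩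
        intro S hS h hc
        exact absurd (Finset.subset_empty.mp hS) (by rintro rfl; exact h.ne_empty rfl)
      | succ s ihs =>
        obtain ⟨N', hN'⟩ := ihs
        obtain ⟨Nk, hNk⟩ := ih N'
        refine ⟨Nk + 1, fun A col hA => ?_⟩
        have hAne : A.Nonempty := Finset.card_pos.mp (by omega)
        set a := A.min' hAne with ha
        have haA : a ∈ A := A.min'_mem hAne
        set A' := A.erase a with hA'
        have hA'card : Nk ≤ A'.card := by
          rw [hA', Finset.card_erase_of_mem haA]; omega
        obtain ⟨H, hHA', hHcard, w, hw⟩ := hNk A' (fun S => col (insert a S)) hA'card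
        obtain ⟨b', hb'H, hb'card, v', hv'⟩ := hN' H col (le_of_eq hHcard.symm)
        have hb'A' : b' ⊆ A' := hb'H.trans hHA'
        have hanb' : a ∉ b' := fun h => (Finset.mem_erase.mp (hb'A' h)).1 rfl
        refine ⟨insert a b', ?_, ?_, fun x => if x = a then w else v' x, ?_⟩
        · exact Finset.insert_subset haA (hb'A'.trans (Finset.erase_subset _ _))
        · rw [Finset.card_insert_of_notMem hanb', hb'card]
        · intro S hS hSne hScard
          by_cases haS : a ∈ S
          · have hmin : S.min' hSne = a := by
              refine le_antisymm (S.min'_le a haS) (Finset.le_min' _ _ _ fun y hy => ?_)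
              have : y ∈ A := by
                rcases Finset.mem_insert.mp (hS hy) with rfl | h
                · exact haA
                · exact (Finset.erase_subset _ _) (hb'A' h)
              exact A.min'_le y this
            simp only [hmin, if_pos]
            have hSa : S.erase a ⊆ b' := by
              intro y hy
              have := hS (Finset.mem_of_mem_erase hy)
              rcases Finset.mem_insert.mp this with rfl | h
              · exact absurd rfl (Finset.ne_of_mem_erase hy)
              · exact h
            have hins : insert a (S.erase a) = S := Finset.insert_erase haS
            have : col (insert a (S.erase a)) = w := by
              refine hw (S.erase a) (hSa.trans hb'H) ?_
              rw [Finset.card_erase_of_mem haS, hScard]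
              omega
            rwa [hins] at this
          · have hSb' : S ⊆ b' := by
              intro y hy
              rcases Finset.mem_insert.mp (hS hy) with rfl | h
              · exact absurd hy haS
              · exact h
            have hmem : S.min' hSne ∈ b' := hSb' (S.min'_mem hSne)
            have hne : S.min' hSne ≠ a := fun h => hanb' (h ▸ hmem)
            simp only [if_neg hne]
            exact hv' S hSb' hSne hScard
    intro m
    obtain ⟨N, hN⟩ := endhom (2 * m)
    refine ⟨N, fun A col hA => ?_⟩
    obtain ⟨b, hbA, hbcard, v, hv⟩ := hN A col hA
    set b1 := b.filter (fun x => v x = true) with hb1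
    set b2 := b.filter (fun x => ¬ (v x = true)) with hb2
    have hsum : b1.card + b2.card = 2 * m := by
      rw [hb1, hb2, Finset.card_filter_add_card_filter_not]; exact hbcard
    have key : ∀ (bb : Finset α) (vv : Bool), bb ⊆ b → m ≤ bb.card →
        (∀ x ∈ bb, v x = vv) → ∃ B, B ⊆ A ∧ B.card = m ∧ ∃ v : Bool,
          ∀ S ⊆ B, S.card = k + 1 → col S = v := by
      intro bb vv hbbb hbbcard hbbv
      obtain ⟨B, hBbb, hBcard⟩ := Finset.exists_subset_card_eq hbbcard
      refine ⟨B, (hBbb.trans hbbb).trans hbA, hBcard, vv, fun S hSB hScard => ?_⟩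
      have hSne : S.Nonempty := Finset.card_pos.mp (by omega)
      have := hv S (hSB.trans (hBbb.trans hbbb)) hSne hScard
      rw [this]
      exact hbbv _ (hBbb (hSB (S.min'_mem hSne)))
    by_cases hm : m ≤ b1.card
    · exact key b1 true (Finset.filter_subset _ _) hm
        (fun x hx => (Finset.mem_filter.mp hx).2)
    · refine key b2 false (Finset.filter_subset _ _) (by omega) (fun x hx => ?_)
      have := (Finset.mem_filter.mp hx).2
      exact Bool.not_eq_true _ ▸ (by simpa using this)

/-! ### Extension of an eventually statement over finitely many indices -/

lemma ev_forall_lt {l : Filter ℕ} {R : ℕ → ℕ → Prop} (n : ℕ)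
    (h : ∀ a < n, ∀ᶠ q in l, R a q) : ∀ᶠ q in l, ∀ a < n, R a q := by
  induction n with
  | zero => exact Filter.Eventually.of_forall (fun q a ha => absurd ha (by omega))
  | succ n ihn =>
    have h1 := ihn (fun a ha => h a (by omega))
    have h2 := h n (by omega)
    filter_upwards [h1, h2] with q hq1 hq2 a ha
    rcases Nat.lt_succ_iff_lt_or_eq.mp ha with h' | rfl
    · exact hq1 a h'
    · exact hq2

/-! ### Extensionality for creatures -/

lemma Creature2.ext2 {x y : Creature2} (h1 : x.mdn = y.mdn) (h2 : x.mup = y.mup)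
    (h3 : x.dis = y.dis) (h4 : x.val = y.val) : x = y := by
  obtain ⟨a1,a2,a3,a4,a5,a6,a7,a8,a9,a10,a11,a12⟩ := x
  obtain ⟨b1,b2,b3,b4,b5,b6,b7,b8,b9,b10,b11,b12⟩ := y
  simp only at h1 h2 h3 h4
  subst h1 h2 h3 h4
  have : a11 = b11 := by rw [a12, b12]
  subst this
  rfl

/-! ### Monotonicity along a pure candidate -/

section chain
variable {t : ℕ → Creature2} (hc : ∀ n, (t n).mup ≤ (t (n + 1)).mdn)
include hc

lemma chain_mup_le_mdn {a b : ℕ} (hab : a < b) : (t a).mup ≤ (t b).mdn := by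
  induction b with
  | zero => omega
  | succ b ihb =>
    rcases Nat.lt_succ_iff_lt_or_eq.mp hab with h | h
    · exact (ihb h).trans ((t b).hm.le.trans (hc b))
    · exact h ▸ hc a

lemma chain_mup_mono {a b : ℕ} (hab : a ≤ b) : (t a).mup ≤ (t b).mup := by
  rcases eq_or_lt_of_le hab with rfl | h
  · exact le_rfl
  · exact (chain_mup_le_mdn hc h).trans (t b).hm.le

lemma chain_mdn_mono {a b : ℕ} (hab : a ≤ b) : (t a).mdn ≤ (t b).mdn := by
  rcases eq_or_lt_of_le hab with rfl | h
  · exact le_rfl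
  · exact ((t a).hm.le.trans (chain_mup_le_mdn hc h))

lemma chain_mdn_lt_mup {a b : ℕ} (hab : a ≤ b) : (t a).mdn < (t b).mup :=
  lt_of_lt_of_le (t a).hm (chain_mup_mono hc hab)

end chain

/-! ### The canonical creature, the induced coloring, and its ultrafilter limit -/

section defs
variable (t : ℕ → Creature2) (j : ℕ) (c' : Creature2 → Bool)

noncomputable def mkC (p q : ℕ) (S : Finset (ℕ → Option ℕ))
    (h : (t j).mdn < (t q).mup ∧ (t p).dis ⊆ Finset.Ico (t j).mdn (t q).mup ∧
      S.Nonempty ∧ S ⊆ (t p).val) : Creature2 where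
  mdn := (t j).mdn
  mup := (t q).mup
  hm := h.1
  dis := (t p).dis
  hdisne := (t p).hdisne
  hdis := h.2.1
  val := S
  hvalne := h.2.2.1
  hdom := fun f hf => (t p).hdom f (h.2.2.2 hf)
  hran := fun f hf => (t p).hran f (h.2.2.2 hf)
  nor := Real.logb 2 S.card
  hnor := rfl

open Classical in
noncomputable def phi (p : ℕ) (S : Finset (ℕ → Option ℕ)) (q : ℕ) : Bool :=
  if h : (t j).mdn < (t q).mup ∧ (t p).dis ⊆ Finset.Ico (t j).mdn (t q).mup ∧
      S.Nonempty ∧ S ⊆ (t p).val then c' (mkC t j p q S h) else false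

lemma phi_pos {p q : ℕ} {S : Finset (ℕ → Option ℕ)}
    (h : (t j).mdn < (t q).mup ∧ (t p).dis ⊆ Finset.Ico (t j).mdn (t q).mup ∧
      S.Nonempty ∧ S ⊆ (t p).val) : phi t j c' p S q = c' (mkC t j p q S h) := by
  unfold phi
  rw [dif_pos h]

open Classical in
noncomputable def Dcol (p : ℕ) (S : Finset (ℕ → Option ℕ)) : Bool :=
  if (∀ᶠ q in (Filter.hyperfilter ℕ : Filter ℕ), phi t j c' p S q = true) then true else false

lemma Dcol_spec (p : ℕ) (S : Finset (ℕ → Option ℕ)) :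
    ∀ᶠ q in (Filter.hyperfilter ℕ : Filter ℕ), phi t j c' p S q = Dcol t j c' p S := by
  unfold Dcol
  split_ifs with h
  · exact h
  · have : {q | phi t j c' p S q = true} ∉ (Filter.hyperfilter ℕ : Filter ℕ) := h
    have hc := (Ultrafilter.compl_mem_iff_notMem (f := Filter.hyperfilter ℕ)).mpr this
    refine Filter.mem_of_superset hc ?_
    intro q hq
    simpa using Bool.not_eq_true _ ▸ hq

/-! ### Existence of the stable color -/

variable (k : ℕ)

def GoodF (v : Bool) (m : ℕ) : Prop :=
  ∀ B, ∃ p, B < p ∧ ∃ V, V ⊆ (t p).val ∧ V.card = m ∧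
    ∀ S ⊆ V, S.card = k → Dcol t j c' p S = v

lemma goodF_mono {v : Bool} {m m' : ℕ} (h : m ≤ m') (hg : GoodF t j c' k v m') :
    GoodF t j c' k v m := by
  intro B
  obtain ⟨p, hp, V, hV, hVc, hhom⟩ := hg B
  obtain ⟨V', hV'V, hV'c⟩ := Finset.exists_subset_card_eq (show m ≤ V.card by omega)
  exact ⟨p, hp, V', hV'V.trans hV, hV'c, fun S hS hSc => hhom S (hS.trans hV'V) hSc⟩

lemma exists_eps (ht2 : ∀ l, (t l).val.card = l + 1) :
    ∃ ε : Bool, ∀ m, GoodF t j c' k ε m := by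
  letI : LinearOrder (ℕ → Option ℕ) := IsWellOrder.linearOrder WellOrderingRel
  have step1 : ∀ m, GoodF t j c' k true m ∨ GoodF t j c' k false m := by
    intro m
    by_contra hcon
    push_neg at hcon
    obtain ⟨h1, h2⟩ := hcon
    rw [GoodF] at h1 h2; push_neg at h1 h2
    obtain ⟨B1, hB1⟩ := h1
    obtain ⟨B2, hB2⟩ := h2
    obtain ⟨N, hN⟩ := ramsey_hyper k m (α := ℕ → Option ℕ)
    set p := max (max B1 B2) N + 1 with hp
    have hcard : N ≤ (t p).val.card := by rw [ht2]; omega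
    obtain ⟨V, hVsub, hVcard, v, hv⟩ := hN (t p).val (fun S => Dcol t j c' p S) hcard
    cases v with
    | true =>
      obtain ⟨S, hS, hSc, hne⟩ := hB1 p (by omega) V hVsub hVcard
      exact hne (hv S hS hSc)
    | false =>
      obtain ⟨S, hS, hSc, hne⟩ := hB2 p (by omega) V hVsub hVcard
      exact hne (hv S hS hSc)
  by_cases hall : ∀ m, GoodF t j c' k true m
  · exact ⟨true, hall⟩
  · push_neg at hall
    obtain ⟨m₀, hm₀⟩ := hall
    refine ⟨false, fun m => ?_⟩
    rcases step1 (max m m₀) with h | h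
    · exact absurd (goodF_mono t j c' k (le_max_right m m₀) h) hm₀
    · exact goodF_mono t j c' k (le_max_left m m₀) h

end defs

/-! ### The recursive construction of the thinned sequence -/

section seq
variable (W : ℕ → Finset (ℕ → Option ℕ))
  (phi' : ℕ → Finset (ℕ → Option ℕ) → ℕ → Bool)
  (Dc : ℕ → Finset (ℕ → Option ℕ) → Bool) (ε : Bool) (j k : ℕ)

local notation "σσ" => ℕ × Finset (ℕ → Option ℕ) × ℕ

def d0 : ℕ × Finset (ℕ → Option ℕ) × ℕ := (0, ∅, 0)

def InvL (L : List (ℕ × Finset (ℕ → Option ℕ) × ℕ)) : Prop :=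
  ∀ i, i < L.length →
    j < (L.getD i d0).1 ∧ (L.getD i d0).1 < (L.getD i d0).2.2 ∧
    (i + 1 < L.length → (L.getD i d0).2.2 < (L.getD (i+1) d0).1) ∧
    (L.getD i d0).2.1 ⊆ W ((L.getD i d0).1) ∧ ((L.getD i d0).2.1).card = j + i + 1 ∧
    (∀ S ⊆ (L.getD i d0).2.1, S.card = k → Dc ((L.getD i d0).1) S = ε) ∧
    (∀ a, a ≤ i → ∀ S ⊆ (L.getD a d0).2.1, S.card = k →
      phi' ((L.getD a d0).1) S ((L.getD i d0).2.2) = ε)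

variable (hspec : ∀ p S, ∀ᶠ q in (Filter.hyperfilter ℕ : Filter ℕ), phi' p S q = Dc p S)
  (hgood : ∀ m B, ∃ p, B < p ∧ ∃ V, V ⊆ W p ∧ V.card = m ∧
    ∀ S ⊆ V, S.card = k → Dc p S = ε)
include hspec hgood

lemma inv_extend {L : List (ℕ × Finset (ℕ → Option ℕ) × ℕ)}
    (hL : InvL W phi' Dc ε j k L) :
    ∃ x : ℕ × Finset (ℕ → Option ℕ) × ℕ, InvL W phi' Dc ε j k (L ++ [x]) := by
  classical
  set n := L.length with hn
  set B := max j ((L.getD (n-1) d0).2.2) with hB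
  obtain ⟨p, hpB, V, hVW, hVc, hVhom⟩ := hgood (j + n + 1) B
  have hone : ∀ (p' : ℕ) (V' : Finset (ℕ → Option ℕ)),
      (∀ S ⊆ V', S.card = k → Dc p' S = ε) →
      ∀ᶠ q in (Filter.hyperfilter ℕ : Filter ℕ),
        ∀ S ∈ V'.powerset, S.card = k → phi' p' S q = ε := by
    intro p' V' hhom
    rw [Filter.eventually_all_finset]
    intro S hS
    by_cases hc : S.card = k
    · have := hhom S (Finset.mem_powerset.mp hS) hc
      filter_upwards [hspec p' S] with q hq _
      rw [hq, this]
    · exact Filter.Eventually.of_forall (fun q hc' => absurd hc' hc)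
  have hev1 : ∀ᶠ q in (Filter.hyperfilter ℕ : Filter ℕ),
      ∀ a < n, ∀ S ∈ ((L.getD a d0).2.1).powerset, S.card = k →
        phi' ((L.getD a d0).1) S q = ε := by
    refine ev_forall_lt n (fun a ha => ?_)
    exact hone _ _ ((hL a ha).2.2.2.2.2.1)
  have hev2 := hone p V hVhom
  have hgt : ∀ᶠ q in (Filter.hyperfilter ℕ : Filter ℕ), p < q := by
    refine Filter.hyperfilter_le_cofinite ?_
    rw [Nat.cofinite_eq_atTop]
    exact Filter.eventually_gt_atTop p
  obtain ⟨q, hq1, hq2, hq3⟩ := (hev1.and (hev2.and hgt)).exists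
  refine ⟨(p, V, q), ?_⟩
  have hlen : (L ++ [(p, V, q)]).length = n + 1 := by simp [hn]
  have hgetlt : ∀ i < n, (L ++ [(p, V, q)]).getD i d0 = L.getD i d0 := by
    intro i hi
    exact List.getD_append _ _ _ _ hi
  have hgetn : (L ++ [(p, V, q)]).getD n d0 = (p, V, q) := by
    rw [List.getD_append_right _ _ _ _ le_rfl]
    simp
  intro i hi
  rw [hlen] at hi
  rcases Nat.lt_succ_iff_lt_or_eq.mp hi with hilt | rfl
  · obtain ⟨c1, c2, c3, c4, c5, c6, c7⟩ := hL i hilt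
    rw [hgetlt i hilt]
    refine ⟨c1, c2, ?_, c4, c5, c6, ?_⟩
    · intro _
      rcases Nat.lt_succ_iff_lt_or_eq.mp (show i + 1 < n + 1 by omega) with h' | h'
      · rw [hgetlt (i+1) h']; exact c3 h'
      · rw [h', hgetn]
        have : (L.getD i d0).2.2 ≤ B := by
          rw [hB]
          have : i = n - 1 := by omega
          rw [this]; exact le_max_right _ _
        omega
    · intro a ha S hS hSc
      rw [hgetlt a (by omega)] at hS ⊢
      exact c7 a ha S hS hSc
  · rw [hgetn]
    have hjp : j < p := by
      have : j ≤ B := le_max_left _ _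
      omega
    refine ⟨hjp, hq3, by omega, hVW, hVc, hVhom, ?_⟩
    intro a ha S hS hSc
    rcases Nat.lt_or_ge a n with h' | h'
    · rw [hgetlt a h'] at hS ⊢
      exact hq1 a h' S (Finset.mem_powerset.mpr hS) hSc
    · have han : a = n := by omega
      rw [han, hgetn] at hS ⊢
      exact hq2 S (Finset.mem_powerset.mpr hS) hSc

lemma keyseq :
    ∃ (p : ℕ → ℕ) (V : ℕ → Finset (ℕ → Option ℕ)) (q : ℕ → ℕ),
      (∀ n, j < p n) ∧ (∀ n, p n < q n) ∧ (∀ n, q n < p (n+1)) ∧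
      (∀ n, V n ⊆ W (p n)) ∧ (∀ n, (V n).card = j + n + 1) ∧
      (∀ a b, a ≤ b → ∀ S ⊆ V a, S.card = k → phi' (p a) S (q b) = ε) := by
  classical
  have ext0 : ∀ M : List (ℕ × Finset (ℕ → Option ℕ) × ℕ),
      ∃ x, InvL W phi' Dc ε j k M → InvL W phi' Dc ε j k (M ++ [x]) := by
    intro M
    by_cases h : InvL W phi' Dc ε j k M
    · obtain ⟨x, hx⟩ := inv_extend W phi' Dc ε j k hspec hgood h
      exact ⟨x, fun _ => hx⟩
    · exact ⟨d0, fun h' => absurd h' h⟩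
  set f : List (ℕ × Finset (ℕ → Option ℕ) × ℕ) → ℕ × Finset (ℕ → Option ℕ) × ℕ :=
    fun M => Classical.choose (ext0 M) with hf
  set L : ℕ → List (ℕ × Finset (ℕ → Option ℕ) × ℕ) :=
    fun n => Nat.rec [] (fun _ M => M ++ [f M]) n with hLdef
  have hLsucc : ∀ n, L (n+1) = L n ++ [f (L n)] := fun n => rfl
  have hLlen : ∀ n, (L n).length = n := by
    intro n
    induction n with
    | zero => rfl
    | succ n ihn => rw [hLsucc, List.length_append, ihn]; rfl
  have hlt : ∀ n m, n < m → n < (L m).length := by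
    intro n m h
    rw [hLlen m]; exact h
  have hLinv : ∀ n, InvL W phi' Dc ε j k (L n) := by
    intro n
    induction n with
    | zero => intro i hi; rw [hLlen 0] at hi; omega
    | succ n ihn => exact Classical.choose_spec (ext0 (L n)) ihn
  have hLpre : ∀ a b, a ≤ b → ∃ r, L b = L a ++ r := by
    intro a b hab
    induction b with
    | zero => exact ⟨[], by rw [Nat.le_zero.mp hab]; exact (List.append_nil _).symm⟩
    | succ b ihb =>
      rcases Nat.le_succ_iff.mp hab with h | h
      · obtain ⟨r, hr⟩ := ihb h
        exact ⟨r ++ [f (L b)], by rw [hLsucc, hr, List.append_assoc]⟩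
      · exact ⟨[], by rw [h]; exact (List.append_nil _).symm⟩
  have hstab : ∀ n m, n < m → (L m).getD n d0 = (L (n+1)).getD n d0 := by
    intro n m h
    obtain ⟨r, hr⟩ := hLpre (n+1) m h
    rw [hr]
    exact List.getD_append _ _ _ _ (hlt n (n+1) (by omega))
  refine ⟨fun n => ((L (n+1)).getD n d0).1, fun n => ((L (n+1)).getD n d0).2.1,
    fun n => ((L (n+1)).getD n d0).2.2, ?_, ?_, ?_, ?_, ?_, ?_⟩
  · exact fun n => (hLinv (n+1) n (hlt n (n+1) (by omega))).1
  · exact fun n => (hLinv (n+1) n (hlt n (n+1) (by omega))).2.1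
  · intro n
    have h := (hLinv (n+2) n (hlt n (n+2) (by omega))).2.2.1 (hlt (n+1) (n+2) (by omega))
    rwa [hstab n (n+2) (by omega), hstab (n+1) (n+2) (by omega)] at h
  · exact fun n => (hLinv (n+1) n (hlt n (n+1) (by omega))).2.2.2.1
  · exact fun n => (hLinv (n+1) n (hlt n (n+1) (by omega))).2.2.2.2.1
  · intro a b hab S hS hSc
    have h := (hLinv (b+1) b (hlt b (b+1) (by omega))).2.2.2.2.2.2 a hab
    rcases Nat.lt_or_ge a b with h' | h'
    · rw [hstab a (b+1) (by omega)] at h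
      exact h S hS hSc
    · have : a = b := by omega
      subst this
      exact h S hS hSc
end seq

end auxiliary
theorem stmt14 (k : ℕ) (hk : 1 ≤ k) (t : ℕ → Creature2) (ht : R2cond t)
    (j : ℕ) (hj : k - 1 ≤ j) (c' : Creature2 → Bool) :
    ∃ tj : ℕ → Creature2, R2cond tj ∧ le2 tj t ∧ restr2 tj j = restr2 t j ∧
      ∃ ε : Bool, ∀ x ∈ X2 tj k j, c' x = ε := by
  classical
  have hch : ∀ n, (t n).mup ≤ (t (n + 1)).mdn := ht.1.1
  have ht2 : ∀ l, (t l).val.card = l + 1 := ht.2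
  obtain ⟨ε, hgoodF⟩ := exists_eps t j c' k ht2
  obtain ⟨p, V, q, h1, h2, h3, h4, h5, h6⟩ :=
    keyseq (fun p => (t p).val) (phi t j c') (Dcol t j c') ε j k
      (Dcol_spec t j c') (fun m B => hgoodF m B)
  have hpmono : StrictMono p := strictMono_nat_of_lt_succ (fun n => (h2 n).trans (h3 n))
  have hpq' : ∀ a b, a ≤ b → p a < q b :=
    fun a b hab => lt_of_le_of_lt (hpmono.monotone hab) (h2 b)
  set A : ℕ → ℕ := fun n => if n = 0 then j else p n with hA
  have hAle : ∀ n, A n ≤ p n := by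
    intro n; rw [hA]; dsimp only; split_ifs with h
    · exact (h1 n).le
    · exact le_rfl
  have hjA : ∀ n, j ≤ A n := by
    intro n; rw [hA]; dsimp only; split_ifs with h
    · exact le_rfl
    · exact (h1 n).le
  have hA0 : A 0 = j := by simp [hA]
  have hAsucc : ∀ n, A (n + 1) = p (n + 1) := by
    intro n; rw [hA]; dsimp only; rw [if_neg (by omega)]
  set tj : ℕ → Creature2 := fun i =>
    if h : i < j then t i else
    { mdn := (t (A (i - j))).mdn
      mup := (t (q (i - j))).mup
      hm := chain_mdn_lt_mup hch ((hAle _).trans (h2 _).le)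
      dis := (t (p (i - j))).dis
      hdisne := (t (p (i - j))).hdisne
      hdis := (t (p (i - j))).hdis.trans (Finset.Ico_subset_Ico
        (chain_mdn_mono hch (hAle _)) (chain_mup_mono hch (h2 _).le))
      val := V (i - j)
      hvalne := Finset.card_pos.mp (by rw [h5]; omega)
      hdom := fun f hf => (t (p (i - j))).hdom f (h4 _ hf)
      hran := fun f hf => (t (p (i - j))).hran f (h4 _ hf)
      nor := Real.logb 2 ((V (i - j)).card)
      hnor := rfl } with htj
  have htjlt : ∀ i, i < j → tj i = t i := by
    intro i h; rw [htj]; dsimp only; rw [dif_pos h]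
  have htjmdn : ∀ i, j ≤ i → (tj i).mdn = (t (A (i - j))).mdn := by
    intro i h; rw [htj]; dsimp only; rw [dif_neg (by omega)]
  have htjmup : ∀ i, j ≤ i → (tj i).mup = (t (q (i - j))).mup := by
    intro i h; rw [htj]; dsimp only; rw [dif_neg (by omega)]
  have htjdis : ∀ i, j ≤ i → (tj i).dis = (t (p (i - j))).dis := by
    intro i h; rw [htj]; dsimp only; rw [dif_neg (by omega)]
  have htjval : ∀ i, j ≤ i → (tj i).val = V (i - j) := by
    intro i h; rw [htj]; dsimp only; rw [dif_neg (by omega)]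
  have htjcard : ∀ i, (tj i).val.card = i + 1 := by
    intro i
    by_cases h : i < j
    · rw [htjlt i h]; exact ht2 i
    · rw [htjval i (by omega), h5]; omega
  refine ⟨tj, ⟨⟨?_, ?_⟩, htjcard⟩, ?_, ?_, ε, ?_⟩
  · -- chain condition
    intro n
    by_cases h : n + 1 < j
    · rw [htjlt n (by omega), htjlt (n+1) h]; exact hch n
    · by_cases h' : n + 1 = j
      · rw [htjlt n (by omega), htjmdn (n+1) (by omega)]
        have he : (n + 1) - j = 0 := by omega
        rw [he, hA0, ← h']
        exact hch n
      · have hn : j ≤ n := by omega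
        rw [htjmup n hn, htjmdn (n+1) (by omega)]
        have he : (n + 1) - j = (n - j) + 1 := by omega
        rw [he, hAsucc]
        exact chain_mup_le_mdn hch (h3 (n - j))
  · -- norms tend to infinity
    have hnor : ∀ i : ℕ, (tj i).nor = Real.logb 2 ((i + 1 : ℕ) : ℝ) := by
      intro i
      by_cases h : i < j
      · rw [htjlt i h, (t i).hnor, ht2 i]
      · have hj' : j ≤ i := by omega
        rw [htj]; dsimp only; rw [dif_neg (by omega)]
        dsimp only
        rw [h5]
        have he : j + (i - j) + 1 = i + 1 := by omega
        rw [he]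
    refine Filter.Tendsto.congr (fun i => (hnor i).symm) ?_
    have hinner : Filter.Tendsto (fun i : ℕ => ((i + 1 : ℕ) : ℝ)) Filter.atTop Filter.atTop :=
      tendsto_natCast_atTop_atTop.comp (Filter.tendsto_add_atTop_nat 1)
    exact (Real.tendsto_logb_atTop (by norm_num)).comp hinner
  · -- le2 tj t
    refine ⟨fun i => if i < j then {i} else insert (A (i - j)) {p (i - j), q (i - j)},
      ?_, ?_, ?_⟩
    · intro n; dsimp only; split_ifs
      · exact Finset.singleton_nonempty n
      · exact Finset.insert_nonempty _ _
    · intro n a ha b hb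
      dsimp only at ha hb
      have hbnd : ∀ m, j ≤ m → ∀ y ∈ insert (A (m - j)) ({p (m - j), q (m - j)} : Finset ℕ),
          A (m - j) ≤ y ∧ y ≤ q (m - j) := by
        intro m _ y hy
        rcases Finset.mem_insert.mp hy with rfl | hy'
        · exact ⟨le_rfl, (hAle _).trans (h2 _).le⟩
        · rcases Finset.mem_insert.mp hy' with rfl | hy''
          · exact ⟨hAle _, (h2 _).le⟩
          · rw [Finset.mem_singleton.mp hy'']
            exact ⟨(hAle _).trans (h2 _).le, le_rfl⟩
      by_cases h : n + 1 < j
      · rw [if_pos (by omega : n < j)] at ha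
        rw [if_pos h] at hb
        rw [Finset.mem_singleton.mp ha, Finset.mem_singleton.mp hb]
        omega
      · by_cases h' : n + 1 = j
        · rw [if_pos (by omega : n < j)] at ha
          rw [if_neg (by omega)] at hb
          rw [Finset.mem_singleton.mp ha]
          have := (hbnd (n+1) (by omega) b hb).1
          have := hjA ((n+1) - j)
          omega
        · have hn : j ≤ n := by omega
          rw [if_neg (by omega)] at ha
          rw [if_neg (by omega)] at hb
          have hub := (hbnd n hn a ha).2
          have hlb := (hbnd (n+1) (by omega) b hb).1
          have he : (n + 1) - j = (n - j) + 1 := by omega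
          rw [he, hAsucc] at hlb
          have := h3 (n - j)
          omega
    · intro n
      dsimp only
      by_cases h : n < j
      · rw [if_pos h, htjlt n h]
        refine ⟨Finset.singleton_nonempty n, ?_, ?_, n, Finset.mem_singleton_self n,
          rfl, subset_rfl⟩
        · rw [Finset.min'_singleton]
        · rw [Finset.max'_singleton]
      · have hj' : j ≤ n := by omega
        rw [if_neg h]
        have hne : (insert (A (n - j)) ({p (n - j), q (n - j)} : Finset ℕ)).Nonempty :=
          Finset.insert_nonempty _ _
        have hmem : ∀ y ∈ insert (A (n - j)) ({p (n - j), q (n - j)} : Finset ℕ),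
            A (n - j) ≤ y ∧ y ≤ q (n - j) := by
          intro y hy
          rcases Finset.mem_insert.mp hy with rfl | hy'
          · exact ⟨le_rfl, (hAle _).trans (h2 _).le⟩
          · rcases Finset.mem_insert.mp hy' with rfl | hy''
            · exact ⟨hAle _, (h2 _).le⟩
            · rw [Finset.mem_singleton.mp hy'']
              exact ⟨(hAle _).trans (h2 _).le, le_rfl⟩
        have hmin : (insert (A (n - j)) ({p (n - j), q (n - j)} : Finset ℕ)).min' hne = A (n - j) := by
          refine le_antisymm (Finset.min'_le _ _ (Finset.mem_insert_self _ _)) ?_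
          exact Finset.le_min' _ _ _ (fun y hy => (hmem y hy).1)
        have hmax : (insert (A (n - j)) ({p (n - j), q (n - j)} : Finset ℕ)).max' hne = q (n - j) := by
          refine le_antisymm (Finset.max'_le _ _ _ (fun y hy => (hmem y hy).2)) ?_
          refine Finset.le_max' _ _ ?_
          exact Finset.mem_insert_of_mem (Finset.mem_insert_of_mem (Finset.mem_singleton_self _))
        refine ⟨hne, ?_, ?_, p (n - j),
          Finset.mem_insert_of_mem (Finset.mem_insert_self _ _), ?_, ?_⟩
        · rw [hmin, htjmdn n hj']
        · rw [hmax, htjmup n hj']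
        · rw [htjdis n hj']
        · rw [htjval n hj']; exact h4 (n - j)
  · -- restriction
    exact congrArg List.ofFn (funext fun i => htjlt i.1 i.2)
  · -- constant color
    rintro x ⟨⟨s, hsR, _, _, hsk⟩, n', hjn', hxs⟩
    have hxcard : x.val.card = k := by rw [← hsk, hsR.2 (k-1)]; omega
    obtain ⟨hu, hmdn, hmup, l, hl, hdis, hval⟩ := hxs
    have hmin : (Finset.Icc j n').min' hu = j :=
      le_antisymm (Finset.min'_le _ _ (Finset.mem_Icc.mpr ⟨le_rfl, hjn'⟩))
        (Finset.le_min' _ _ _ fun y hy => (Finset.mem_Icc.mp hy).1)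
    have hmax : (Finset.Icc j n').max' hu = n' :=
      le_antisymm (Finset.max'_le _ _ _ fun y hy => (Finset.mem_Icc.mp hy).2)
        (Finset.le_max' _ _ (Finset.mem_Icc.mpr ⟨hjn', le_rfl⟩))
    rw [hmin] at hmdn
    rw [hmax] at hmup
    obtain ⟨hjl, hln'⟩ := Finset.mem_Icc.mp hl
    have hab : l - j ≤ n' - j := by omega
    have hxmdn : x.mdn = (t j).mdn := by
      rw [hmdn, htjmdn j le_rfl]
      have he : j - j = 0 := by omega
      rw [he, hA0]
    have hxmup : x.mup = (t (q (n' - j))).mup := by rw [hmup, htjmup n' (by omega)]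
    have hxdis : x.dis = (t (p (l - j))).dis := by rw [hdis, htjdis l hjl]
    have hxval : x.val ⊆ V (l - j) := by rw [htjval l hjl] at hval; exact hval
    have hcond : (t j).mdn < (t (q (n' - j))).mup ∧
        (t (p (l - j))).dis ⊆ Finset.Ico (t j).mdn (t (q (n' - j))).mup ∧
        x.val.Nonempty ∧ x.val ⊆ (t (p (l - j))).val := by
      refine ⟨chain_mdn_lt_mup hch ((h1 (n' - j)).le.trans (h2 (n' - j)).le), ?_,
        Finset.card_pos.mp (by omega), hxval.trans (h4 (l - j))⟩
      exact (t (p (l - j))).hdis.trans (Finset.Ico_subset_Ico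
        (chain_mdn_mono hch (h1 (l - j)).le)
        (chain_mup_mono hch (hpq' (l - j) (n' - j) hab).le))
    have hkey := h6 (l - j) (n' - j) hab x.val hxval hxcard
    rw [phi_pos t j c' hcond] at hkey
    rw [show x = mkC t j (p (l - j)) (q (n' - j)) x.val hcond from
      Creature2.ext2 hxmdn hxmup hxdis rfl]
    exact hkey
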